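/- arXiv:2106.03375 — 2 statements merged into one kernel-verified Lean document; each statement's English description precedes it below -/
import Mathlib

section
/- If A and B are square matrices with AB = BA = 0, then the mixed second partial derivative of the map g(t,s) = exp(tA + sB) with respect to t and s is the zero matrix for all (t,s). -/
open NormedSpace

attribute [local instance] Matrix.linftyOpNormedRing Matrix.linftyOpNormedAlgebra

section aux

variable {n : ℕ}

lemma mul_exp_eq_self (A B : Matrix (Fin n) (Fin n) ℝ) (hAB : A * B = 0) (s : ℝ) :
    A * exp (s • B) = A := by
  have key : ∀ u : ℝ, HasDerivAt (fun u : ℝ => A * exp (u • B)) 0 u := by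
    intro u
    have h := (hasDerivAt_exp_smul_const' (𝕂 := ℝ) B u).const_mul A
    simp only [← mul_assoc, hAB, zero_mul, mul_zero] at h
    exact h
  have hconst : (fun u : ℝ => A * exp (u • B)) s
      = (fun u : ℝ => A * exp (u • B)) 0 :=
    is_const_of_deriv_eq_zero (fun u => (key u).differentiableAt)
      (fun u => (key u).deriv) s 0
  simpa using hconst

theorem inner_deriv (A B : Matrix (Fin n) (Fin n) ℝ)
    (hAB : A * B = 0) (hBA : B * A = 0) (t s' : ℝ) :
    deriv (fun t' : ℝ => exp (t' • A + s' • B)) t = exp (t • A) * A := by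
  have hcomm : ∀ t' : ℝ, Commute (t' • A) (s' • B) := by
    intro t'
    unfold Commute SemiconjBy
    rw [smul_mul_smul_comm, smul_mul_smul_comm, hAB, hBA, smul_zero, smul_zero]
  have heq : (fun t' : ℝ => exp (t' • A + s' • B))
      = fun t' : ℝ => exp (t' • A) * exp (s' • B) := by
    funext t'
    exact exp_add_of_commute (hcomm t')
  rw [heq]
  have h := ((hasDerivAt_exp_smul_const (𝕂 := ℝ) A t).mul_const (exp (s' • B))).deriv
  erw [h]
  rw [mul_assoc, mul_exp_eq_self A B hAB]
  rfl

end aux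

theorem mixed_second_deriv_exp_zero {n : ℕ} (A B : Matrix (Fin n) (Fin n) ℝ)
    (hAB : A * B = 0) (hBA : B * A = 0) (t s : ℝ) :
    deriv (fun s' : ℝ => deriv (fun t' : ℝ => exp (t' • A + s' • B)) t) s = 0 := by
  have heq : (fun s' : ℝ => deriv (fun t' : ℝ => exp (t' • A + s' • B)) t)
      = fun _ : ℝ => exp (t • A) * A := by
    funext s'
    exact inner_deriv A B hAB hBA t s'
  rw [heq]
  exact deriv_const _ _
end

section
/- If A₁, ..., Aₘ are square matrices with AᵢAⱼ = 0 for all i ≠ j, then exp(∑ᵢ tᵢAᵢ) = I + ∑ᵢ (exp(tᵢAᵢ) − I) for all real t₁,...,tₘ. -/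
open NormedSpace

private lemma exp_mul_eq_self {n : ℕ} (M X : Matrix (Fin n) (Fin n) ℝ) (h : M * X = 0) :
    exp M * X = X := by
  letI : SeminormedRing (Matrix (Fin n) (Fin n) ℝ) := Matrix.linftyOpSemiNormedRing
  letI : NormedRing (Matrix (Fin n) (Fin n) ℝ) := Matrix.linftyOpNormedRing
  letI : NormedAlgebra ℝ (Matrix (Fin n) (Fin n) ℝ) := Matrix.linftyOpNormedAlgebra
  rw [exp_eq_tsum (𝕂 := ℝ)]
  beta_reduce
  erw [← (expSeries_summable' (𝕂 := ℝ) M).tsum_mul_right]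
  rw [tsum_eq_single 0]
  · simp
  · intro k hk
    obtain ⟨k, rfl⟩ := Nat.exists_eq_succ_of_ne_zero hk
    rw [smul_mul_assoc, pow_succ, mul_assoc, h, mul_zero, smul_zero]

private lemma mul_exp_eq_self_s9 {n : ℕ} (M X : Matrix (Fin n) (Fin n) ℝ) (h : X * M = 0) :
    X * exp M = X := by
  letI : SeminormedRing (Matrix (Fin n) (Fin n) ℝ) := Matrix.linftyOpSemiNormedRing
  letI : NormedRing (Matrix (Fin n) (Fin n) ℝ) := Matrix.linftyOpNormedRing
  letI : NormedAlgebra ℝ (Matrix (Fin n) (Fin n) ℝ) := Matrix.linftyOpNormedAlgebra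
  rw [exp_eq_tsum (𝕂 := ℝ)]
  beta_reduce
  erw [← (expSeries_summable' (𝕂 := ℝ) M).tsum_mul_left]
  rw [tsum_eq_single 0]
  · simp
  · intro k hk
    obtain ⟨k, rfl⟩ := Nat.exists_eq_succ_of_ne_zero hk
    rw [mul_smul_comm, pow_succ', ← mul_assoc, h, zero_mul, smul_zero]

theorem exp_sum_of_mul_eq_zero {n m : ℕ} (A : Fin m → Matrix (Fin n) (Fin n) ℝ)
    (h : ∀ i j, i ≠ j → A i * A j = 0) (t : Fin m → ℝ) :
    exp (∑ i, t i • A i) = 1 + ∑ i, (exp (t i • A i) - 1) := by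
  have key : ∀ s : Finset (Fin m),
      exp (∑ i ∈ s, t i • A i) = 1 + ∑ i ∈ s, (exp (t i • A i) - 1) := by
    intro s
    induction s using Finset.induction_on with
    | empty => simp [exp_zero]
    | @insert a s ha ih =>
      have hz : ∀ i j : Fin m, i ≠ j → (t i • A i) * (t j • A j) = 0 := fun i j hij => by
        rw [smul_mul_smul_comm, h i j hij, smul_zero]
      have hcomm : Commute (t a • A a) (∑ i ∈ s, t i • A i) := by
        unfold Commute SemiconjBy
        rw [Finset.mul_sum, Finset.sum_mul]
        refine Finset.sum_congr rfl fun i hi => ?_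
        rw [hz a i (fun e => ha (e ▸ hi)), hz i a (fun e => ha (e ▸ hi))]
      rw [Finset.sum_insert ha, Matrix.exp_add_of_commute _ _ hcomm, ih,
        Finset.sum_insert ha]
      have hBa : ∀ i ∈ s, (exp (t a • A a) - 1) * (exp (t i • A i) - 1) = 0 := by
        intro i hi
        have h1 : (exp (t a • A a) - 1) * (t i • A i) = 0 := by
          rw [sub_mul, one_mul,
            exp_mul_eq_self _ _ (hz a i (fun e => ha (e ▸ hi))), sub_self]
        rw [mul_sub, mul_one, mul_exp_eq_self_s9 _ _ h1, sub_self]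
      have expand : exp (t a • A a) * (1 + ∑ i ∈ s, (exp (t i • A i) - 1))
          = 1 + ((exp (t a • A a) - 1) + ∑ i ∈ s, (exp (t i • A i) - 1)) := by
        have : exp (t a • A a) = 1 + (exp (t a • A a) - 1) := by abel
        rw [this, add_mul, one_mul, mul_add, mul_one, Finset.mul_sum,
          Finset.sum_congr rfl hBa, Finset.sum_const_zero, add_zero]
        abel
      rw [expand]
  simpa using key Finset.univ
end
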